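/- Let P and Q be orthogonal projections on a complex Hilbert space H. Then for every ψ ∈ H, the sequence (PQ)ⁿψ converges in norm to Rψ, where R is the orthogonal projection onto ran P ∩ ran Q. In other words, the strong limit of (PQ)ⁿ is the lattice meet P ∧ Q of the projections P and Q. -/

import Mathlib

variable {H : Type} [NormedAddCommGroup H] [InnerProductSpace ℂ H] [CompleteSpace H]

open scoped InnerProductSpace
open ContinuousLinearMap Filter

lemma op_inner_proj {P : H →L[ℂ] H} (h1 : IsSelfAdjoint P) (h2 : P * P = P) (x y : H) :
    ⟪P x, P y⟫_ℂ = ⟪x, P y⟫_ℂ := by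
  have ha : ContinuousLinearMap.adjoint P = P := ContinuousLinearMap.isSelfAdjoint_iff'.mp h1
  calc ⟪P x, P y⟫_ℂ = ⟪(ContinuousLinearMap.adjoint P) x, P y⟫_ℂ := by rw [ha]
    _ = ⟪x, P (P y)⟫_ℂ := ContinuousLinearMap.adjoint_inner_left P (P y) x
    _ = ⟪x, P y⟫_ℂ := by
        congr 1
        have := congrArg (fun A : H →L[ℂ] H => A y) h2
        simpa using this

lemma proj_contract {P : H →L[ℂ] H} (h1 : IsSelfAdjoint P) (h2 : P * P = P) (x : H) :
    ‖P x‖ ≤ ‖x‖ := by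
  rcases eq_or_lt_of_le (norm_nonneg (P x)) with h0 | h0
  · rw [← h0]; exact norm_nonneg x
  have hsq : ‖P x‖ ^ 2 = RCLike.re ⟪x, P x⟫_ℂ := by
    rw [← inner_self_eq_norm_sq (𝕜 := ℂ), op_inner_proj h1 h2]
  have hcs : RCLike.re ⟪x, P x⟫_ℂ ≤ ‖x‖ * ‖P x‖ := by
    calc RCLike.re ⟪x, P x⟫_ℂ ≤ ‖⟪x, P x⟫_ℂ‖ := RCLike.re_le_norm _
      _ ≤ ‖x‖ * ‖P x‖ := norm_inner_le_norm x (P x)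
  nlinarith

lemma proj_fix {P : H →L[ℂ] H} (h2 : P * P = P) {x : H} (hx : x ∈ LinearMap.range (P : H →ₗ[ℂ] H)) :
    P x = x := by
  obtain ⟨y, rfl⟩ := hx
  have := congrArg (fun A : H →L[ℂ] H => A y) h2
  simpa using this

lemma proj_norm_eq {P : H →L[ℂ] H} (h1 : IsSelfAdjoint P) (h2 : P * P = P) {x : H}
    (h : ‖P x‖ = ‖x‖) : P x = x := by
  have horth : ⟪P x, x - P x⟫_ℂ = 0 := by
    have h1' : ⟪P x, x⟫_ℂ = ⟪x, P x⟫_ℂ := by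
      have ha : ContinuousLinearMap.adjoint P = P := ContinuousLinearMap.isSelfAdjoint_iff'.mp h1
      calc ⟪P x, x⟫_ℂ = ⟪(ContinuousLinearMap.adjoint P) x, x⟫_ℂ := by rw [ha]
        _ = ⟪x, P x⟫_ℂ := ContinuousLinearMap.adjoint_inner_left P x x
    rw [inner_sub_right, h1', op_inner_proj h1 h2, sub_self]
  have hpyth : ‖x‖ ^ 2 = ‖P x‖ ^ 2 + ‖x - P x‖ ^ 2 := by
    have hxx : P x + (x - P x) = x := by abel
    calc ‖x‖ ^ 2 = ‖P x + (x - P x)‖ ^ 2 := by rw [hxx]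
      _ = ‖P x‖ ^ 2 + 2 * RCLike.re ⟪P x, x - P x⟫_ℂ + ‖x - P x‖ ^ 2 :=
          norm_add_sq (𝕜 := ℂ) _ _
      _ = ‖P x‖ ^ 2 + ‖x - P x‖ ^ 2 := by rw [horth]; simp
  have : ‖x - P x‖ ^ 2 = 0 := by rw [h] at hpyth; linarith
  have : x - P x = 0 := by
    simpa using (norm_eq_zero.mp (by nlinarith [norm_nonneg (x - P x)]))
  linear_combination (norm := abel) -this

/-- `P` is an orthogonal projection on `H`: self-adjoint and idempotent. -/
def IsOrthProj (P : H →L[ℂ] H) : Prop := IsSelfAdjoint P ∧ P * P = P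

/-- For orthogonal projections `P, Q` and every `ψ ∈ H`, the sequence `(PQ)ⁿψ` converges in
norm to `Rψ`, where `R = P ∧ Q` is the orthogonal projection onto `ran P ∩ ran Q`; i.e. the
strong limit of `(PQ)ⁿ` is the lattice meet `P ∧ Q`. -/
theorem stmt16 (P Q R : H →L[ℂ] H) (hP : IsOrthProj P) (hQ : IsOrthProj Q)
    (hR : IsOrthProj R)
    (hRr : LinearMap.range (R : H →ₗ[ℂ] H) = LinearMap.range (P : H →ₗ[ℂ] H) ⊓ LinearMap.range (Q : H →ₗ[ℂ] H)) (ψ : H) :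
    Filter.Tendsto (fun n : ℕ => ((P * Q) ^ n) ψ) Filter.atTop (nhds (R ψ)) := by
  obtain ⟨hP1, hP2⟩ := hP
  obtain ⟨hQ1, hQ2⟩ := hQ
  obtain ⟨hR1, hR2⟩ := hR
  set S : H →L[ℂ] H := Q * P * Q with hS
  have hSsa : IsSelfAdjoint S := by
    unfold S
    unfold IsSelfAdjoint
    simp only [star_mul, hP1.star_eq, hQ1.star_eq, mul_assoc]
  have hQS : Q * S = S := by
    rw [hS, ← mul_assoc, ← mul_assoc, hQ2]
  have hQpow : ∀ n : ℕ, Q * (S ^ n * Q) = S ^ n * Q := by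
    intro n
    cases n with
    | zero => simpa using hQ2
    | succ m =>
      rw [pow_succ', mul_assoc S (S ^ m) Q, ← mul_assoc Q S _, hQS]
  have hkey : ∀ n : ℕ, (P * Q) ^ (n + 1) = P * S ^ n * Q := by
    intro n
    induction n with
    | zero => simp
    | succ n ih =>
      calc (P * Q) ^ (n + 2) = (P * Q) ^ (n + 1) * (P * Q) := pow_succ _ _
        _ = P * S ^ n * Q * (P * Q) := by rw [ih]
        _ = P * (S ^ n * (Q * P * Q)) := by simp only [mul_assoc]
        _ = P * (S ^ n * S) := by rw [← hS]
        _ = P * S ^ (n + 1) := by rw [← pow_succ]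
        _ = P * S ^ (n + 1) * Q := by
              have hSQ : S * Q = S := by rw [hS, mul_assoc, hQ2]
              have hpowQ : S ^ (n + 1) * Q = S ^ (n + 1) := by rw [pow_succ, mul_assoc, hSQ]
              rw [mul_assoc, hpowQ]
  -- the iteration vector
  set x : H := Q ψ with hx
  set a : ℕ → ℝ := fun n => ‖(S ^ n) x‖ with ha
  have hScontr : ∀ y : H, ‖S y‖ ≤ ‖y‖ := by
    intro y
    have h0 : S y = Q (P (Q y)) := rfl
    rw [h0]
    calc ‖Q (P (Q y))‖ ≤ ‖P (Q y)‖ := proj_contract hQ1 hQ2 _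
      _ ≤ ‖Q y‖ := proj_contract hP1 hP2 _
      _ ≤ ‖y‖ := proj_contract hQ1 hQ2 _
  have haanti : Antitone a := by
    apply antitone_nat_of_succ_le
    intro n
    have h0 : (S ^ (n + 1)) x = S ((S ^ n) x) := by rw [pow_succ']; rfl
    calc a (n + 1) = ‖S ((S ^ n) x)‖ := by rw [ha]; simp only [h0]
      _ ≤ ‖(S ^ n) x‖ := hScontr _
      _ = a n := rfl
  have hbdd : BddBelow (Set.range a) := ⟨0, by rintro y ⟨n, rfl⟩; exact norm_nonneg _⟩
  set c : ℝ := ⨅ n, a n with hc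
  have hconv : Filter.Tendsto a Filter.atTop (nhds c) := tendsto_atTop_ciInf haanti hbdd
  have hcle : ∀ n, c ≤ a n := fun n => ciInf_le hbdd n
  have hc0 : 0 ≤ c := le_ciInf fun n => norm_nonneg _
  -- inner product identities
  have hpow_apply : ∀ n m : ℕ, (S ^ (n + m)) x = (S ^ n) ((S ^ m) x) := by
    intro n m; rw [pow_add]; rfl
  have hadj : ∀ n m : ℕ, ⟪(S ^ n) x, (S ^ m) x⟫_ℂ = ⟪x, (S ^ (n + m)) x⟫_ℂ := by
    intro n m
    have hsa : ContinuousLinearMap.adjoint (S ^ n) = S ^ n :=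
      ContinuousLinearMap.isSelfAdjoint_iff'.mp (hSsa.pow n)
    calc ⟪(S ^ n) x, (S ^ m) x⟫_ℂ
        = ⟪(ContinuousLinearMap.adjoint (S ^ n)) x, (S ^ m) x⟫_ℂ := by rw [hsa]
      _ = ⟪x, (S ^ n) ((S ^ m) x)⟫_ℂ := ContinuousLinearMap.adjoint_inner_left _ _ _
      _ = ⟪x, (S ^ (n + m)) x⟫_ℂ := by rw [hpow_apply]
  have hinn : ∀ n m : ℕ, c ^ 2 ≤ RCLike.re ⟪(S ^ n) x, (S ^ m) x⟫_ℂ := by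
    intro n m
    rw [hadj]
    rcases Nat.even_or_odd (n + m) with ⟨k, hk⟩ | ⟨k, hk⟩
    · have : ⟪x, (S ^ (n + m)) x⟫_ℂ = ⟪(S ^ k) x, (S ^ k) x⟫_ℂ := by
        rw [hk, ← hadj]
      rw [this, inner_self_eq_norm_sq (𝕜 := ℂ)]
      have := hcle k
      nlinarith [norm_nonneg ((S ^ k) x)]
    · set y : H := (S ^ k) x with hy
      have h1 : ⟪x, (S ^ (n + m)) x⟫_ℂ = ⟪y, S y⟫_ℂ := by
        have e1 : (S ^ (n + m)) x = (S ^ k) (S ((S ^ k) x)) := by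
          rw [hk]
          have : 2 * k + 1 = k + (1 + k) := by ring
          rw [this, hpow_apply, hpow_apply]
          simp [pow_one]
        rw [e1, ← hy]
        calc ⟪x, (S ^ k) (S y)⟫_ℂ = ⟪(S ^ k) x, S y⟫_ℂ := by
              have hsa : ContinuousLinearMap.adjoint (S ^ k) = S ^ k :=
                ContinuousLinearMap.isSelfAdjoint_iff'.mp (hSsa.pow k)
              rw [← ContinuousLinearMap.adjoint_inner_left (S ^ k) (S y) x, hsa]
          _ = ⟪y, S y⟫_ℂ := by rw [hy]
      have h2 : ⟪y, S y⟫_ℂ = ⟪P (Q y), P (Q y)⟫_ℂ := by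
        have e2 : S y = Q (P (Q y)) := rfl
        rw [e2]
        have ha2 : ContinuousLinearMap.adjoint Q = Q :=
          ContinuousLinearMap.isSelfAdjoint_iff'.mp hQ1
        calc ⟪y, Q (P (Q y))⟫_ℂ
            = ⟪y, (ContinuousLinearMap.adjoint Q) (P (Q y))⟫_ℂ := by rw [ha2]
          _ = ⟪Q y, P (Q y)⟫_ℂ := ContinuousLinearMap.adjoint_inner_right _ _ _
          _ = ⟪P (Q y), P (Q y)⟫_ℂ := (op_inner_proj hP1 hP2 (Q y) (Q y)).symm
      rw [h1, h2, inner_self_eq_norm_sq (𝕜 := ℂ)]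
      have h3 : a (k + 1) ≤ ‖P (Q y)‖ := by
        have e3 : (S ^ (k + 1)) x = S y := by rw [pow_succ']; rfl
        calc a (k + 1) = ‖S y‖ := by rw [ha]; simp only [e3]
          _ = ‖Q (P (Q y))‖ := rfl
          _ ≤ ‖P (Q y)‖ := proj_contract hQ1 hQ2 _
      have := hcle (k + 1)
      nlinarith [norm_nonneg (P (Q y))]
  -- Cauchy sequence
  have hCauchy : CauchySeq (fun n => (S ^ n) x) := by
    rw [Metric.cauchySeq_iff']
    intro eps heps
    have hsq : Filter.Tendsto (fun n => a n ^ 2) Filter.atTop (nhds (c ^ 2)) := hconv.pow 2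
    have hev : ∀ᶠ n in Filter.atTop, a n ^ 2 < c ^ 2 + eps ^ 2 / 2 := by
      apply hsq.eventually_lt_const
      nlinarith
    obtain ⟨N, hN⟩ := Filter.eventually_atTop.mp hev
    refine ⟨N, fun n hn => ?_⟩
    rw [dist_eq_norm]
    have hexp : ‖(S ^ n) x - (S ^ N) x‖ ^ 2
        = a n ^ 2 - 2 * RCLike.re ⟪(S ^ n) x, (S ^ N) x⟫_ℂ + a N ^ 2 :=
      norm_sub_sq (𝕜 := ℂ) _ _
    have h1 := hinn n N
    have h2 := hN n hn
    have h3 := hN N le_rfl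
    have hlt : ‖(S ^ n) x - (S ^ N) x‖ ^ 2 < eps ^ 2 := by nlinarith
    exact lt_of_pow_lt_pow_left₀ 2 (le_of_lt heps) hlt
  obtain ⟨u, hu⟩ := cauchySeq_tendsto_of_complete hCauchy
  -- the limit is fixed by S, Q, P
  have hSu : S u = u := by
    have h1 : Filter.Tendsto (fun n => (S ^ (n + 1)) x) Filter.atTop (nhds u) :=
      (Filter.tendsto_add_atTop_iff_nat 1).mpr hu
    have h2 : Filter.Tendsto (fun n => S ((S ^ n) x)) Filter.atTop (nhds (S u)) :=
      (S.continuous.tendsto u).comp hu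
    have he : (fun n => S ((S ^ n) x)) = fun n => (S ^ (n + 1)) x := by
      funext n; rw [pow_succ']; rfl
    rw [he] at h2
    exact (tendsto_nhds_unique h2 h1)
  have hchain : ‖u‖ ≤ ‖P (Q u)‖ := by
    have e0 : ‖u‖ = ‖Q (P (Q u))‖ := by
      conv_lhs => rw [← hSu]
      rfl
    rw [e0]
    exact proj_contract hQ1 hQ2 _
  have hQu : Q u = u := by
    apply proj_norm_eq hQ1 hQ2
    have l2 : ‖P (Q u)‖ ≤ ‖Q u‖ := proj_contract hP1 hP2 _
    have l3 : ‖Q u‖ ≤ ‖u‖ := proj_contract hQ1 hQ2 _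
    linarith
  have hPu : P u = u := by
    apply proj_norm_eq hP1 hP2
    have l2 : ‖P u‖ ≤ ‖u‖ := proj_contract hP1 hP2 _
    have l4 : ‖u‖ ≤ ‖P u‖ := by rw [hQu] at hchain; exact hchain
    linarith
  -- u belongs to ran R
  have humem : u ∈ LinearMap.range (R : H →ₗ[ℂ] H) := by
    rw [hRr]
    exact Submodule.mem_inf.mpr ⟨⟨u, hPu⟩, ⟨u, hQu⟩⟩
  have hRu : R u = u := proj_fix hR2 humem
  -- R is absorbed by P and Q
  have hPRop : P * R = R := by
    ext z
    have hz : R z ∈ LinearMap.range (P : H →ₗ[ℂ] H) := by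
      have : R z ∈ LinearMap.range (R : H →ₗ[ℂ] H) := ⟨z, rfl⟩
      rw [hRr] at this
      exact (Submodule.mem_inf.mp this).1
    simpa using proj_fix hP2 hz
  have hQRop : Q * R = R := by
    ext z
    have hz : R z ∈ LinearMap.range (Q : H →ₗ[ℂ] H) := by
      have : R z ∈ LinearMap.range (R : H →ₗ[ℂ] H) := ⟨z, rfl⟩
      rw [hRr] at this
      exact (Submodule.mem_inf.mp this).2
    simpa using proj_fix hQ2 hz
  have hRP : R * P = R := by
    have h1 : R * P = star (P * R) := by rw [star_mul, hP1.star_eq, hR1.star_eq]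
    rw [h1, hPRop, hR1.star_eq]
  have hRQ : R * Q = R := by
    have h1 : R * Q = star (Q * R) := by rw [star_mul, hQ1.star_eq, hR1.star_eq]
    rw [h1, hQRop, hR1.star_eq]
  have hRpow : ∀ n : ℕ, R * (P * Q) ^ (n + 1) = R := by
    intro n
    induction n with
    | zero => rw [pow_one, ← mul_assoc, hRP, hRQ]
    | succ n ih =>
      rw [pow_succ, ← mul_assoc, ih, ← mul_assoc, hRP, hRQ]
  -- main convergence to u
  have hmain : Filter.Tendsto (fun n => ((P * Q) ^ (n + 1)) ψ) Filter.atTop (nhds u) := by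
    have heq : (fun n => ((P * Q) ^ (n + 1)) ψ) = fun n => P ((S ^ n) x) := by
      funext n
      rw [hkey n]
      rfl
    rw [heq]
    have h2 : Filter.Tendsto (fun n => P ((S ^ n) x)) Filter.atTop (nhds (P u)) :=
      (P.continuous.tendsto u).comp hu
    rwa [hPu] at h2
  -- identify R ψ = u
  have hRψ : R ψ = u := by
    have h3 : Filter.Tendsto (fun n => R (((P * Q) ^ (n + 1)) ψ)) Filter.atTop (nhds (R u)) :=
      (R.continuous.tendsto u).comp hmain
    have h4 : (fun n => R (((P * Q) ^ (n + 1)) ψ)) = fun _ => R ψ := by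
      funext n
      rw [← ContinuousLinearMap.mul_apply, hRpow n]
    rw [h4] at h3
    have := tendsto_nhds_unique h3 tendsto_const_nhds
    rw [← this, hRu]
  rw [hRψ]
  exact (Filter.tendsto_add_atTop_iff_nat 1).mp hmain
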